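/- Let p be an odd prime and F: V → F_{p^m} a vectorial dual-bent function satisfying Condition I with sign ε ∈ {±1}, where V is an n-dimensional F_p-vector space with n even. Let N_1 = #{x ∈ V : F(x) is a nonzero square in F_{p^m}} and N_{−1} = #{x ∈ V : F(x) is a nonsquare}. Then N_1 = N_{−1} = (p^n − ε p^{n/2})(p^m − 1)/(2 p^m). -/

import Mathlib

open Complex Finset

/-- `ζ_p^k` for `k ∈ Z/p`. -/
noncomputable def zetaP (p : ℕ) (k : ZMod p) : ℂ :=
  Complex.exp (2 * Real.pi * Complex.I * (k.val : ℂ) / p)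

lemma zetaP_eq_pow (p : ℕ) (k : ZMod p) :
    zetaP p k = Complex.exp (2 * Real.pi * Complex.I / p) ^ k.val := by
  rw [zetaP, ← Complex.exp_nat_mul]; congr 1; ring

lemma zetaP_zero (p : ℕ) [NeZero p] : zetaP p 0 = 1 := by
  rw [zetaP_eq_pow, ZMod.val_zero, pow_zero]

lemma zetaP_add (p : ℕ) [NeZero p] (a b : ZMod p) :
    zetaP p (a + b) = zetaP p a * zetaP p b := by
  have h1 : Complex.exp (2 * Real.pi * Complex.I / p) ^ p = 1 :=
    (Complex.isPrimitiveRoot_exp p (NeZero.ne p)).pow_eq_one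
  rw [zetaP_eq_pow, zetaP_eq_pow, zetaP_eq_pow, ZMod.val_add, ← pow_eq_pow_mod _ h1, pow_add]

lemma zetaP_ne_one (p : ℕ) [NeZero p] {k : ZMod p} (hk : k ≠ 0) : zetaP p k ≠ 1 := by
  rw [zetaP_eq_pow]
  exact (Complex.isPrimitiveRoot_exp p (NeZero.ne p)).pow_ne_one_of_pos_of_lt
    (ZMod.val_pos.mpr hk).ne' k.val_lt

lemma sum_shift_eq_zero {A : Type*} [AddCommGroup A] [Fintype A] (f : A → ℂ)
    (hadd : ∀ a b : A, f (a + b) = f a * f b) (a0 : A) (h1 : f a0 ≠ 1) :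
    ∑ a : A, f a = 0 := by
  have h : ∑ a : A, f (a0 + a) = ∑ a : A, f a :=
    Fintype.sum_equiv (Equiv.addLeft a0) _ f (fun x => rfl)
  simp only [hadd, ← Finset.mul_sum] at h
  by_contra hS
  exact h1 (mul_right_cancel₀ hS (by rw [h, one_mul]))

/-- Under Condition I with sign `ε`, the numbers
`N_1 = #{x : F(x) nonzero square}` and `N_{-1} = #{x : F(x) nonsquare}`
satisfy `N_1 = N_{-1} = (p^n - ε p^{n/2})(p^m - 1)/(2 p^m)`. -/
theorem count_square_values_condI
    (p n m d : ℕ) [Fact p.Prime] (hp : p ≠ 2)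
    (hm : 1 ≤ m) (hn : Even n) (hmn : 2 * m ≤ n)
    (V : Type*) [AddCommGroup V] [Module (ZMod p) V] [Fintype V]
    (hV : Fintype.card V = p ^ n)
    (K : Type*) [Field K] [Fintype K] [DecidableEq K] [Algebra (ZMod p) K]
    (hK : Fintype.card K = p ^ m)
    (B : V →ₗ[ZMod p] V →ₗ[ZMod p] ZMod p)
    (hBsym : ∀ v w, B v w = B w v)
    (hBnd : ∀ v, (∀ w, B v w = 0) → v = 0)
    (F Fstar : V → K)
    (ε : ℤ) (hε : ε = 1 ∨ ε = -1)
    (hd : 2 ≤ d) (hdeven : Even d)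
    (hgcd : Nat.gcd (d - 1) (p ^ m - 1) = 1)
    (hF0 : F 0 = 0) (hFstar0 : Fstar 0 = 0)
    (hFstarneg : ∀ a : V, Fstar (-a) = Fstar a)
    (hWalsh : ∀ c : K, c ≠ 0 → ∀ a : V,
      ∑ x : V, zetaP p (Algebra.trace (ZMod p) K (c * F x) - B a x)
        = (ε : ℂ) * (p : ℂ) ^ (n / 2)
            * zetaP p (Algebra.trace (ZMod p) K (c ^ ((1 : ℤ) - d) * Fstar a))) :
    (Finset.univ.filter (fun x : V => IsSquare (F x) ∧ F x ≠ 0)).card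
      = (Finset.univ.filter (fun x : V => ¬ IsSquare (F x))).card
    ∧ (2 * (p : ℤ) ^ m *
        ((Finset.univ.filter (fun x : V => IsSquare (F x) ∧ F x ≠ 0)).card : ℤ)
      = ((p : ℤ) ^ n - ε * (p : ℤ) ^ (n / 2)) * ((p : ℤ) ^ m - 1)) := by
  have hpp : p.Prime := Fact.out
  have hcharP : CharP K p :=
    charP_of_injective_ringHom (algebraMap (ZMod p) K).injective p
  have hchar : ringChar K = p := ringChar.eq K p
  subst hchar
  set q := ringChar K with hq
  have hchar2 : q ≠ 2 := hp
  have hp0 : ((q : ℕ) : ℂ) ≠ 0 := Nat.cast_ne_zero.mpr hpp.ne_zero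
  -- orthogonality
  have ortho : ∀ u : K, u ≠ 0 → ∑ c : K, zetaP q (Algebra.trace (ZMod q) K (c * u)) = 0 := by
    intro u hu
    obtain ⟨c0, hc0⟩ := FiniteField.trace_to_zmod_nondegenerate K hu
    refine sum_shift_eq_zero _ (fun a b => ?_) c0 ?_
    · rw [show (a + b) * u = a * u + b * u by ring, map_add, zetaP_add]
    · exact zetaP_ne_one q (by rwa [mul_comm] at hc0)
  -- Walsh at a = 0
  have hS : ∀ c : K, c ≠ 0 →
      ∑ x : V, zetaP q (Algebra.trace (ZMod q) K (c * F x)) = (ε : ℂ) * (q : ℂ) ^ (n / 2) := by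
    intro c hc
    have h := hWalsh c hc 0
    simpa [hFstar0, zetaP_zero] using h
  -- per-value count
  have hNb : ∀ b : K, b ≠ 0 →
      (q : ℂ) ^ m * (((Finset.univ.filter (fun x : V => F x = b)).card : ℕ) : ℂ)
        = (q : ℂ) ^ n - (ε : ℂ) * (q : ℂ) ^ (n / 2) := by
    intro b hb
    have hx : ∀ x : V, ∑ c : K, zetaP q (Algebra.trace (ZMod q) K (c * (F x - b)))
        = if F x = b then ((q : ℂ) ^ m) else 0 := by
      intro x
      by_cases h : F x = b
      · rw [if_pos h]
        simp [h, zetaP_zero, Finset.card_univ, hK]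
      · rw [if_neg h]
        exact ortho _ (sub_ne_zero.mpr h)
    have way1 : ∑ c : K, ∑ x : V, zetaP q (Algebra.trace (ZMod q) K (c * (F x - b)))
        = (q : ℂ) ^ m * (((Finset.univ.filter (fun x : V => F x = b)).card : ℕ) : ℂ) := by
      rw [Finset.sum_comm]
      rw [Finset.sum_congr rfl (fun x _ => hx x), ← Finset.sum_filter,
        Finset.sum_const, nsmul_eq_mul, mul_comm]
    have hterm : ∀ c : K, c ≠ 0 →
        ∑ x : V, zetaP q (Algebra.trace (ZMod q) K (c * (F x - b)))
          = ((ε : ℂ) * (q : ℂ) ^ (n / 2)) * zetaP q (Algebra.trace (ZMod q) K (c * (-b))) := by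
      intro c hc
      have hsplit : ∀ x : V, zetaP q (Algebra.trace (ZMod q) K (c * (F x - b)))
          = zetaP q (Algebra.trace (ZMod q) K (c * F x))
              * zetaP q (Algebra.trace (ZMod q) K (c * (-b))) := by
        intro x
        rw [show c * (F x - b) = c * F x + c * (-b) by ring, map_add, zetaP_add]
      rw [Finset.sum_congr rfl (fun x _ => hsplit x), ← Finset.sum_mul, hS c hc]
    have hminus : ∑ c ∈ Finset.univ.erase (0 : K),
        zetaP q (Algebra.trace (ZMod q) K (c * (-b))) = -1 := by
      have h0 := Finset.sum_erase_add Finset.univ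
        (fun c : K => zetaP q (Algebra.trace (ZMod q) K (c * (-b)))) (Finset.mem_univ 0)
      rw [ortho (-b) (neg_ne_zero.mpr hb)] at h0
      simp only [zero_mul, map_zero, zetaP_zero] at h0
      linear_combination h0
    have way2 : ∑ c : K, ∑ x : V, zetaP q (Algebra.trace (ZMod q) K (c * (F x - b)))
        = (q : ℂ) ^ n - (ε : ℂ) * (q : ℂ) ^ (n / 2) := by
      have h0 := Finset.sum_erase_add Finset.univ
        (fun c : K => ∑ x : V, zetaP q (Algebra.trace (ZMod q) K (c * (F x - b))))
        (Finset.mem_univ 0)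
      rw [← h0]
      have t0 : ∑ x : V, zetaP q (Algebra.trace (ZMod q) K ((0 : K) * (F x - b)))
          = (q : ℂ) ^ n := by
        simp [zetaP_zero, Finset.card_univ, hV]
      have terase : ∑ c ∈ Finset.univ.erase (0 : K),
          ∑ x : V, zetaP q (Algebra.trace (ZMod q) K (c * (F x - b)))
            = - ((ε : ℂ) * (q : ℂ) ^ (n / 2)) := by
        rw [Finset.sum_congr rfl
          (fun c hc => hterm c (Finset.ne_of_mem_erase hc)), ← Finset.mul_sum, hminus]
        ring
      simp only [terase, zero_mul, map_zero]
      rw [show ∑ x : V, zetaP q ((0 : ZMod q)) = (q : ℂ) ^ n by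
        simp [zetaP_zero, Finset.card_univ, hV]]
      ring
    rw [← way1, way2]
  -- counting squares and nonsquares in K
  have hone_le : 1 ≤ q ^ m := Nat.one_le_pow _ _ hpp.pos
  have hcards : (Finset.univ.filter (fun b : K => IsSquare b ∧ b ≠ 0)).card
      = (Finset.univ.filter (fun b : K => ¬ IsSquare b)).card := by
    have hchi := quadraticChar_sum_zero hchar2
    have hval : ∀ a : K, (quadraticChar K a : ℤ)
        = (if IsSquare a ∧ a ≠ 0 then (1 : ℤ) else 0)
            - (if ¬ IsSquare a then (1 : ℤ) else 0) := by
      intro a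
      by_cases h0 : a = 0
      · subst h0
        simp [quadraticChar_zero]
      · by_cases hs : IsSquare a
        · simp [h0, hs, (quadraticChar_one_iff_isSquare h0).mpr hs]
        · rw [quadraticChar_neg_one_iff_not_isSquare.mpr hs]
          simp [hs, h0]
    rw [Finset.sum_congr rfl (fun a _ => hval a), Finset.sum_sub_distrib,
      Finset.sum_boole, Finset.sum_boole, sub_eq_zero] at hchi
    exact_mod_cast hchi
  have htotal : (Finset.univ.filter (fun b : K => IsSquare b ∧ b ≠ 0)).card
      + (Finset.univ.filter (fun b : K => ¬ IsSquare b)).card = q ^ m - 1 := by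
    have hsplit := Finset.card_filter_add_card_filter_not
      (s := Finset.univ.filter (fun b : K => b ≠ 0)) (p := fun b : K => IsSquare b)
    have e1 : (Finset.univ.filter (fun b : K => b ≠ 0)).filter (fun b : K => IsSquare b)
        = Finset.univ.filter (fun b : K => IsSquare b ∧ b ≠ 0) := by
      rw [Finset.filter_filter]
      apply Finset.filter_congr
      intro b _
      simp [and_comm]
    have e2 : (Finset.univ.filter (fun b : K => b ≠ 0)).filter (fun b : K => ¬ IsSquare b)
        = Finset.univ.filter (fun b : K => ¬ IsSquare b) := by
      rw [Finset.filter_filter]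
      apply Finset.filter_congr
      intro b _
      constructor
      · tauto
      · intro h
        exact ⟨fun h0 => h (h0 ▸ (IsSquare.zero : IsSquare (0:K))), h⟩
    have e3 : (Finset.univ.filter (fun b : K => b ≠ 0)).card = q ^ m - 1 := by
      rw [Finset.filter_ne', Finset.card_erase_of_mem (Finset.mem_univ 0),
        Finset.card_univ, hK]
    rw [e1, e2, e3] at hsplit
    exact hsplit
  -- fiberwise decomposition
  have hfiber : ∀ (P : K → Prop) [DecidablePred P],
      ((Finset.univ.filter (fun x : V => P (F x))).card : ℕ)
        = ∑ b ∈ Finset.univ.filter (fun b : K => P b),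
            (Finset.univ.filter (fun x : V => F x = b)).card := by
    intro P _
    rw [Finset.card_eq_sum_card_fiberwise
      (f := F) (t := Finset.univ.filter (fun b : K => P b))
      (fun x hx => by
        simp only [Finset.mem_coe, Finset.mem_filter, Finset.mem_univ, true_and] at hx ⊢
        exact hx)]
    refine Finset.sum_congr rfl (fun b hb => ?_)
    congr 1
    rw [Finset.filter_filter]
    apply Finset.filter_congr
    intro x _
    simp only [Finset.mem_filter, Finset.mem_univ, true_and] at hb
    constructor
    · tauto
    · intro h
      exact ⟨h ▸ hb, h⟩
  have hb1 : ∀ b : K, b ∈ Finset.univ.filter (fun b : K => IsSquare b ∧ b ≠ 0) → b ≠ 0 := by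
    intro b hb
    simp only [Finset.mem_filter, Finset.mem_univ, true_and] at hb
    exact hb.2
  have hb2 : ∀ b : K, b ∈ Finset.univ.filter (fun b : K => ¬ IsSquare b) → b ≠ 0 := by
    intro b hb
    simp only [Finset.mem_filter, Finset.mem_univ, true_and] at hb
    exact fun h0 => hb (h0 ▸ (IsSquare.zero : IsSquare (0:K)))
  have hfib1 := hfiber (P := fun b : K => IsSquare b ∧ b ≠ 0)
  have hfib2 := hfiber (P := fun b : K => ¬ IsSquare b)
  -- main complex identities
  have e1 : (q : ℂ) ^ m * (((Finset.univ.filter (fun x : V => IsSquare (F x) ∧ F x ≠ 0)).card : ℕ) : ℂ)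
      = ((Finset.univ.filter (fun b : K => IsSquare b ∧ b ≠ 0)).card : ℂ)
          * ((q : ℂ) ^ n - (ε : ℂ) * (q : ℂ) ^ (n / 2)) := by
    rw [hfib1]
    push_cast
    rw [Finset.mul_sum, Finset.sum_congr rfl (fun b hb => hNb b (hb1 b hb)),
      Finset.sum_const, nsmul_eq_mul]
  have e2 : (q : ℂ) ^ m * (((Finset.univ.filter (fun x : V => ¬ IsSquare (F x))).card : ℕ) : ℂ)
      = ((Finset.univ.filter (fun b : K => ¬ IsSquare b)).card : ℂ)
          * ((q : ℂ) ^ n - (ε : ℂ) * (q : ℂ) ^ (n / 2)) := by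
    rw [hfib2]
    push_cast
    rw [Finset.mul_sum, Finset.sum_congr rfl (fun b hb => hNb b (hb2 b hb)),
      Finset.sum_const, nsmul_eq_mul]
  have hqm0 : (q : ℂ) ^ m ≠ 0 := pow_ne_zero _ hp0
  constructor
  · have key : (((Finset.univ.filter (fun x : V => IsSquare (F x) ∧ F x ≠ 0)).card : ℕ) : ℂ)
        = (((Finset.univ.filter (fun x : V => ¬ IsSquare (F x))).card : ℕ) : ℂ) := by
      apply mul_left_cancel₀ hqm0
      rw [e1, e2, hcards]
    exact_mod_cast key
  · have h2c : (2 : ℂ) * ((Finset.univ.filter (fun b : K => IsSquare b ∧ b ≠ 0)).card : ℂ)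
        = (q : ℂ) ^ m - 1 := by
      have h2 : 2 * (Finset.univ.filter (fun b : K => IsSquare b ∧ b ≠ 0)).card = q ^ m - 1 := by
        omega
      have hc := congrArg (Nat.cast (R := ℂ)) h2
      push_cast [Nat.cast_sub hone_le] at hc
      exact_mod_cast hc
    have hgoal : ((2 * (q : ℤ) ^ m *
        ((Finset.univ.filter (fun x : V => IsSquare (F x) ∧ F x ≠ 0)).card : ℤ) : ℤ) : ℂ)
        = ((((q : ℤ) ^ n - ε * (q : ℤ) ^ (n / 2)) * ((q : ℤ) ^ m - 1) : ℤ) : ℂ) := by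
      push_cast
      linear_combination 2 * e1 + ((q : ℂ) ^ n - (ε : ℂ) * (q : ℂ) ^ (n / 2)) * h2c
    exact_mod_cast hgoal
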